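/- A finite simple graph G is 3-colorable if and only if there exists a Hermitian positive semidefinite complex matrix A, with rows and columns indexed by the vertices of Δ(G'), such that rank(A) ≤ 3 and A fits Δ(G'). -/

import Mathlib

open Matrix
open scoped ComplexOrder

/-- Vertices of the graph `G'`: the original vertices of `G` together with, for every
pair `{i,j}` of distinct vertices (represented as `i < j`), four new gadget vertices
`a_{ij}, b_{ij}, c_{ij}, d_{ij}` encoded as `Fin 4` (`0 = a`, `1 = b`, `2 = c`, `3 = d`). -/
abbrev GVert (n : ℕ) := Fin n ⊕ ({p : Fin n × Fin n // p.1 < p.2} × Fin 4)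

/-- The edges of `G'`: the original edges of `G`, and for every pair `i < j` the nine
gadget edges `{i,a},{i,b},{i,d},{a,b},{a,j},{b,c},{c,d},{c,j},{d,j}`. -/
def gadgetRel {n : ℕ} (G : SimpleGraph (Fin n)) : GVert n → GVert n → Prop
  | Sum.inl i, Sum.inl j => G.Adj i j
  | Sum.inl v, Sum.inr (⟨(i, j), _⟩, k) =>
      (v = i ∧ (k = 0 ∨ k = 1 ∨ k = 3)) ∨ (v = j ∧ (k = 0 ∨ k = 2 ∨ k = 3))
  | Sum.inr (p, k), Sum.inr (q, l) =>
      p = q ∧ ((k = 0 ∧ l = 1) ∨ (k = 1 ∧ l = 2) ∨ (k = 2 ∧ l = 3))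
  | _, _ => False

/-- The graph `G'` obtained from `G` by inserting the gadget `H_{ij}` for every pair of
distinct vertices `i, j` of `G`. -/
def gadgetGraph {n : ℕ} (G : SimpleGraph (Fin n)) : SimpleGraph (GVert n) :=
  SimpleGraph.fromRel (gadgetRel G)

/-- The triangle decoration `Δ(H)` of a graph `H`: each vertex `w` becomes the triangle
`(w,1),(w,2),(w,3)` (here `(w,0),(w,1),(w,2)`), with `(w,0)` identified with `w`. -/
def triDec {W : Type*} (H : SimpleGraph W) : SimpleGraph (W × Fin 3) :=
  SimpleGraph.fromRel fun a b =>
    (a.2 = 0 ∧ b.2 = 0 ∧ H.Adj a.1 b.1) ∨ (a.1 = b.1 ∧ a.2 ≠ b.2)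

/-- A matrix `A` fits a graph `H` if all its diagonal entries are `1` and `A v w = 0`
whenever `{v,w}` is an edge of `H`. -/
def Fits {V R : Type*} [Zero R] [One R] (H : SimpleGraph V) (A : Matrix V V R) : Prop :=
  (∀ v, A v v = 1) ∧ ∀ v w, H.Adj v w → A v w = 0

/-! ### Auxiliary material -/

open Module
open scoped ComplexInnerProductSpace

section InnerLemmas

variable {E : Type*} [NormedAddCommGroup E] [InnerProductSpace ℂ E]

lemma unit_ne_zero {x : E} (hx : ⟪x, x⟫ = 1) : x ≠ 0 := by
  intro h; rw [h, inner_zero_left] at hx; exact one_ne_zero hx.symm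

lemma orthonormal_triple {x y z : E} (hx : ⟪x,x⟫ = 1) (hy : ⟪y,y⟫ = 1) (hz : ⟪z,z⟫ = 1)
    (hxy : ⟪x,y⟫ = 0) (hxz : ⟪x,z⟫ = 0) (hyz : ⟪y,z⟫ = 0) : Orthonormal ℂ ![x,y,z] := by
  have hyx : ⟪y,x⟫ = 0 := by rw [← inner_conj_symm, hxy, map_zero]
  have hzx : ⟪z,x⟫ = 0 := by rw [← inner_conj_symm, hxz, map_zero]
  have hzy : ⟪z,y⟫ = 0 := by rw [← inner_conj_symm, hyz, map_zero]
  rw [orthonormal_iff_ite]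
  intro k l
  fin_cases k <;> fin_cases l <;> simp [hx,hy,hz,hxy,hxz,hyz,hyx,hzx,hzy, -inner_self_eq_norm_sq_to_K]

/-- The key property of the gadget: in an inner product space of dimension at most 3,
if unit vectors can be assigned to the six vertices of the gadget `H_{ij}` which are
orthogonal along its edges, then the vectors of `i` and `j` are orthogonal or parallel. -/
lemma gadget_lemma [FiniteDimensional ℂ E] (hdim : finrank ℂ E ≤ 3)
    (i j a b c d : E)
    (hii : ⟪i,i⟫ = 1) (hjj : ⟪j,j⟫ = 1) (haa : ⟪a,a⟫ = 1) (hbb : ⟪b,b⟫ = 1)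
    (hcc : ⟪c,c⟫ = 1) (hdd : ⟪d,d⟫ = 1)
    (h1 : ⟪i,a⟫ = 0) (h2 : ⟪i,b⟫ = 0) (h3 : ⟪i,d⟫ = 0) (h4 : ⟪a,b⟫ = 0)
    (h5 : ⟪a,j⟫ = 0) (h6 : ⟪b,c⟫ = 0) (h7 : ⟪c,d⟫ = 0) (h8 : ⟪c,j⟫ = 0)
    (h9 : ⟪d,j⟫ = 0) :
    ⟪i,j⟫ = 0 ∨ ∃ μ : ℂ, j = μ • i := by
  by_contra hcon
  push_neg at hcon
  obtain ⟨hij, hpar⟩ := hcon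
  have hi0 := unit_ne_zero hii
  have hj0 := unit_ne_zero hjj
  have ha0 := unit_ne_zero haa
  have hc0 := unit_ne_zero hcc
  have hd0 := unit_ne_zero hdd
  have hindep : LinearIndependent ℂ ![i, j] := by
    rw [LinearIndependent.pair_iff]
    intro s t hst
    rcases eq_or_ne t 0 with ht | ht
    · subst ht
      simp only [zero_smul, add_zero] at hst
      rcases smul_eq_zero.mp hst with hs | h0
      · exact ⟨hs, rfl⟩
      · exact absurd h0 hi0
    · exfalso
      apply hpar (-(s/t))
      have hj' : t • j = -(s • i) := by linear_combination (norm := module) hst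
      have : j = t⁻¹ • (t • j) := by rw [smul_smul, inv_mul_cancel₀ ht, one_smul]
      rw [this, hj', smul_neg, smul_smul, inv_mul_eq_div, ← neg_smul]
  set W : Submodule ℂ E := Submodule.span ℂ {i, j} with hW
  have hWrange : Set.range ![i, j] = {i, j} := by
    ext x; simp [Matrix.range_cons, Matrix.range_empty, or_comm]
  have hWfr : finrank ℂ W = 2 := by
    rw [hW, ← hWrange, finrank_span_eq_card hindep]
    simp
  have hWorth : finrank ℂ (Wᗮ : Submodule ℂ E) ≤ 1 := by
    have := Submodule.finrank_add_finrank_orthogonal (K := W)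
    omega
  have hmem : ∀ x : E, ⟪i,x⟫ = 0 → ⟪j,x⟫ = 0 → x ∈ Wᗮ := by
    intro x hix hjx
    rw [Submodule.mem_orthogonal]
    intro u hu
    induction hu using Submodule.span_induction with
    | mem y hy => rcases hy with h | h <;> subst h <;> assumption
    | zero => simp
    | add y z _ _ hy hz => rw [inner_add_left, hy, hz, add_zero]
    | smul t y _ hy => rw [inner_smul_left, hy, mul_zero]
  have haW : a ∈ Wᗮ := hmem a h1 (by rw [← inner_conj_symm, h5, map_zero])
  have hdW : d ∈ Wᗮ := hmem d h3 (by rw [← inner_conj_symm, h9, map_zero])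
  have hspan_a : Submodule.span ℂ {a} = Wᗮ := by
    apply Submodule.eq_of_le_of_finrank_le
    · rw [Submodule.span_le, Set.singleton_subset_iff]; exact haW
    · calc finrank ℂ (Wᗮ : Submodule ℂ E) ≤ 1 := hWorth
        _ = finrank ℂ (Submodule.span ℂ ({a} : Set E)) := (finrank_span_singleton ha0).symm
  have hd_mem : d ∈ Submodule.span ℂ ({a} : Set E) := hspan_a ▸ hdW
  obtain ⟨μ, hμ⟩ := Submodule.mem_span_singleton.mp hd_mem
  have hμ0 : μ ≠ 0 := by rintro rfl; rw [zero_smul] at hμ; exact hd0 hμ.symm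
  have hca : ⟪c,a⟫ = 0 := by
    have : ⟪c, μ • a⟫ = 0 := by rw [hμ]; exact h7
    rw [inner_smul_right] at this
    exact (mul_eq_zero.mp this).resolve_left hμ0
  have hai : ⟪a,i⟫ = 0 := by rw [← inner_conj_symm, h1, map_zero]
  have hfam : Orthonormal ℂ ![a, i, b] := orthonormal_triple haa hii hbb hai h4 h2
  have hindep3 := hfam.linearIndependent
  have hfr3 : finrank ℂ E = 3 := by
    have := hindep3.fintype_card_le_finrank
    simp only [Fintype.card_fin] at this
    omega
  have htop : Submodule.span ℂ (Set.range ![a, i, b]) = ⊤ := by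
    apply Submodule.eq_top_of_finrank_eq
    rw [finrank_span_eq_card hindep3, hfr3]; simp
  have hcmem : c ∈ Submodule.span ℂ (Set.range ![a, i, b]) := htop ▸ Submodule.mem_top
  obtain ⟨g, hg⟩ := (Submodule.mem_span_range_iff_exists_fun ℂ).mp hcmem
  have hcoeff : ∀ k : Fin 3, ⟪![a,i,b] k, c⟫ = g k := by
    intro k
    rw [← hg, inner_sum]
    rw [Finset.sum_eq_single k]
    · rw [inner_smul_right, orthonormal_iff_ite.mp hfam k k]
      simp
    · intro l _ hl
      rw [inner_smul_right, orthonormal_iff_ite.mp hfam k l]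
      simp [hl.symm]
    · simp
  have hg0 : g 0 = 0 := by
    have := hcoeff 0
    simp only [Matrix.cons_val_zero] at this
    rw [← this, ← inner_conj_symm, hca, map_zero]
  have hg2 : g 2 = 0 := by
    have := hcoeff 2
    simp only [Matrix.cons_val_two, Matrix.tail_cons, Matrix.head_cons] at this
    rw [← this, h6]
  have hc_eq : c = g 1 • i := by
    rw [← hg, Fin.sum_univ_three, hg0, hg2]
    simp
  have hg1 : g 1 ≠ 0 := by
    rintro h
    rw [h, zero_smul] at hc_eq
    exact hc0 hc_eq
  have hcj : ⟪c, j⟫ = (starRingEnd ℂ) (g 1) * ⟪i, j⟫ := by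
    rw [hc_eq, inner_smul_left]
  rw [h8] at hcj
  have := (mul_eq_zero.mp hcj.symm).resolve_left (by simpa using hg1)
  exact hij this

/-- From unit vectors in a space of dimension at most 3 which are pairwise orthogonal or
parallel, and orthogonal along the edges of `G`, we obtain a 3-coloring of `G`. -/
lemma coloring_of_vectors {n : ℕ} (G : SimpleGraph (Fin n)) [FiniteDimensional ℂ E]
    (hdim : finrank ℂ E ≤ 3) (u : Fin n → E)
    (hunit : ∀ v, ⟪u v, u v⟫ = 1)
    (hdich : ∀ v w, v ≠ w → ⟪u v, u w⟫ = 0 ∨ ∃ μ : ℂ, u w = μ • u v)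
    (hadj : ∀ v w, G.Adj v w → ⟪u v, u w⟫ = 0) : G.Colorable 3 := by
  classical
  have h0 : ∀ v, u v ≠ 0 := fun v => unit_ne_zero (hunit v)
  set r : Fin n → Fin n → Prop := fun v w => ∃ μ : ℂ, u w = μ • u v with hr
  have hrrefl : ∀ v, r v v := fun v => ⟨1, (one_smul _ _).symm⟩
  have hrsymm : ∀ v w, r v w → r w v := by
    rintro v w ⟨μ, hμ⟩
    have hμ0 : μ ≠ 0 := by rintro rfl; rw [zero_smul] at hμ; exact h0 w hμ
    exact ⟨μ⁻¹, by rw [hμ, smul_smul, inv_mul_cancel₀ hμ0, one_smul]⟩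
  have hrtrans : ∀ v w x, r v w → r w x → r v x := by
    rintro v w x ⟨μ, hμ⟩ ⟨ν, hν⟩
    exact ⟨ν * μ, by rw [hν, hμ, smul_smul]⟩
  have hnotboth : ∀ v w, r v w → ⟪u v, u w⟫ ≠ 0 := by
    rintro v w ⟨μ, hμ⟩ horth
    rw [hμ, inner_smul_right, hunit v, mul_one] at horth
    rw [horth, zero_smul] at hμ
    exact h0 w hμ
  set S : Fin n → Finset (Fin n) := fun v => Finset.univ.filter (fun w => r v w) with hS
  have hSne : ∀ v, (S v).Nonempty := fun v => ⟨v, by simp [hS, hrrefl v]⟩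
  set φ : Fin n → Fin n := fun v => (S v).min' (hSne v) with hφ
  have hSeq : ∀ v w, r v w → S v = S w := by
    intro v w hvw
    ext x
    simp only [hS, Finset.mem_filter, Finset.mem_univ, true_and]
    exact ⟨fun h => hrtrans _ _ _ (hrsymm _ _ hvw) h, fun h => hrtrans _ _ _ hvw h⟩
  have hφr : ∀ v, r v (φ v) := by
    intro v
    have := (S v).min'_mem (hSne v)
    simpa [hS] using this
  have hφeq : ∀ v w, r v w → φ v = φ w := by
    intro v w h; simp only [hφ]; congr 1; exact hSeq v w h
  have hφpar : ∀ v w, φ v = φ w → r v w := by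
    intro v w h
    have h1 := hφr v
    have h2 := hφr w
    rw [h] at h1
    exact hrtrans _ _ _ h1 (hrsymm _ _ h2)
  set T : Finset (Fin n) := Finset.univ.image φ with hT
  have horthT : Orthonormal ℂ (fun x : ↥T => u x) := by
    rw [orthonormal_iff_ite]
    rintro ⟨x, hx⟩ ⟨y, hy⟩
    by_cases hxy : x = y
    · subst hxy
      simp [hunit x, -inner_self_eq_norm_sq_to_K]
    · have hne : (⟨x,hx⟩ : ↥T) ≠ ⟨y,hy⟩ := by simpa using hxy
      rw [if_neg hne]
      rcases hdich x y hxy with h | h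
      · exact h
      · exfalso
        simp only [hT, Finset.mem_image, Finset.mem_univ, true_and] at hx hy
        obtain ⟨v, rfl⟩ := hx
        obtain ⟨w, rfl⟩ := hy
        have e1 : φ (φ v) = φ v := (hφeq v (φ v) (hφr v)).symm
        have e2 : φ (φ w) = φ w := (hφeq w (φ w) (hφr w)).symm
        have := hφeq (φ v) (φ w) h
        rw [e1, e2] at this
        exact hxy this
  have hcard : T.card ≤ 3 := by
    have := horthT.linearIndependent.fintype_card_le_finrank
    rw [Fintype.card_coe] at this
    omega
  refine ⟨SimpleGraph.Coloring.mk
    (fun v => Fin.castLE hcard ((T.equivFin) ⟨φ v, by simp [hT]⟩)) ?_⟩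
  intro v w hvw heq
  have hφne : φ v ≠ φ w := by
    intro h
    exact hnotboth v w (hφpar v w h) (hadj v w hvw)
  apply hφne
  have := Fin.castLE_injective hcard heq
  have := T.equivFin.injective this
  simpa using this

end InnerLemmas

section Transport

lemma sum_dite_lt {β : Type*} [AddCommMonoid β] {m N : ℕ} (hmn : m ≤ N) (F : Fin m → β) :
    ∑ t : Fin N, (if h : (t : ℕ) < m then F ⟨t, h⟩ else 0) = ∑ k : Fin m, F k := by
  classical
  rw [← Finset.sum_subset (Finset.subset_univ (Finset.univ.map (Fin.castLEEmb hmn)))]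
  · rw [Finset.sum_map]
    apply Finset.sum_congr rfl
    intro k _
    rw [dif_pos (by simpa using k.2)]
    exact congrArg F (Fin.ext (by simp))
  · intro t _ ht
    rw [dif_neg]
    intro hc
    apply ht
    simp only [Finset.mem_map, Finset.mem_univ, true_and]
    exact ⟨⟨(t : ℕ), hc⟩, by ext; simp⟩

lemma exists_euclidean_rep {E : Type*} [NormedAddCommGroup E] [InnerProductSpace ℂ E]
    [FiniteDimensional ℂ E] {ι : Type*} (u : ι → E)
    (h3 : finrank ℂ ↥(Submodule.span ℂ (Set.range u)) ≤ 3) :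
    ∃ w : ι → EuclideanSpace ℂ (Fin 3), ∀ i j, ⟪w i, w j⟫ = ⟪u i, u j⟫ := by
  set S := Submodule.span ℂ (Set.range u) with hS
  let bas := stdOrthonormalBasis ℂ ↥S
  let u' : ι → ↥S := fun i => ⟨u i, Submodule.subset_span (Set.mem_range_self i)⟩
  let c : ι → EuclideanSpace ℂ (Fin (finrank ℂ ↥S)) := fun i => bas.repr (u' i)
  refine ⟨fun i => (WithLp.equiv 2 _).symm
    (fun t : Fin 3 => if h : (t : ℕ) < finrank ℂ ↥S then c i ⟨t, h⟩ else 0), ?_⟩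
  intro i j
  have hterm : ∀ t : Fin 3,
      (starRingEnd ℂ) ((if h : (t : ℕ) < finrank ℂ ↥S then c i ⟨t, h⟩ else 0)) *
        (if h : (t : ℕ) < finrank ℂ ↥S then c j ⟨t, h⟩ else 0) =
      if h : (t : ℕ) < finrank ℂ ↥S
        then (starRingEnd ℂ) (c i ⟨t, h⟩) * c j ⟨t, h⟩ else 0 := by
    intro t
    by_cases h : (t : ℕ) < finrank ℂ ↥S
    · rw [dif_pos h, dif_pos h, dif_pos h]
    · rw [dif_neg h, dif_neg h, dif_neg h, map_zero, zero_mul]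
  calc (inner ℂ ((WithLp.equiv 2 _).symm
          (fun t : Fin 3 => if h : (t : ℕ) < finrank ℂ ↥S then c i ⟨t, h⟩ else 0))
        ((WithLp.equiv 2 _).symm
          (fun t : Fin 3 => if h : (t : ℕ) < finrank ℂ ↥S then c j ⟨t, h⟩ else 0)) : ℂ)
      = ∑ t : Fin 3, (starRingEnd ℂ) ((if h : (t : ℕ) < finrank ℂ ↥S then c i ⟨t, h⟩ else 0)) *
          (if h : (t : ℕ) < finrank ℂ ↥S then c j ⟨t, h⟩ else 0) := by
        simp only [PiLp.inner_apply, RCLike.inner_apply, WithLp.equiv_symm_apply, WithLp.ofLp_toLp]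
        exact Finset.sum_congr rfl fun _ _ => mul_comm _ _
    _ = ∑ k : Fin (finrank ℂ ↥S), (starRingEnd ℂ) (c i k) * c j k := by
        rw [Finset.sum_congr rfl (fun t _ => hterm t)]
        exact sum_dite_lt h3 (fun k => (starRingEnd ℂ) (c i k) * c j k)
    _ = ⟪c i, c j⟫ := by
        simp only [PiLp.inner_apply, RCLike.inner_apply]
        exact Finset.sum_congr rfl fun _ _ => mul_comm _ _
    _ = ⟪u' i, u' j⟫ := by
        simp only [c]
        rw [LinearIsometryEquiv.inner_map_map]
    _ = ⟪u i, u j⟫ := rfl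

end Transport

/-! ### Forward direction: coloring constructions -/

/-- Colors of the gadget vertices `a,b,c,d`, given colors `x` of `i` and `y` of `j`. -/
def gcolAux (x y : Fin 3) : Fin 4 → Fin 3 := fun k =>
  if x = y then (if k = 0 ∨ k = 2 then x + 1 else x + 2)
  else if k = 1 then y else if k = 2 then x else 0 - x - y

lemma gcolAux_spec : ∀ x y : Fin 3,
    gcolAux x y 0 ≠ x ∧ gcolAux x y 0 ≠ y ∧ gcolAux x y 1 ≠ x ∧ gcolAux x y 2 ≠ y ∧
    gcolAux x y 3 ≠ x ∧ gcolAux x y 3 ≠ y ∧ gcolAux x y 0 ≠ gcolAux x y 1 ∧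
    gcolAux x y 1 ≠ gcolAux x y 2 ∧ gcolAux x y 2 ≠ gcolAux x y 3 := by decide

/-- Extension of a coloring of `G` to the vertices of `G'`. -/
def gcolG {n : ℕ} (C : Fin n → Fin 3) : GVert n → Fin 3
  | Sum.inl v => C v
  | Sum.inr (⟨(i, j), _⟩, k) => gcolAux (C i) (C j) k

lemma gcolG_proper {n : ℕ} (G : SimpleGraph (Fin n)) (C : G.Coloring (Fin 3)) :
    ∀ x y, gadgetRel G x y → gcolG C x ≠ gcolG C y := by
  rintro (v | ⟨⟨⟨i₁, j₁⟩, hij₁⟩, k⟩) (w | ⟨⟨⟨i₂, j₂⟩, hij₂⟩, l⟩) h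
  · exact C.valid h
  · obtain ⟨rfl, hk⟩ | ⟨rfl, hk⟩ := h <;> rcases hk with rfl | rfl | rfl <;>
      simp only [gcolG] <;>
      first
        | exact (gcolAux_spec _ _).1.symm
        | exact (gcolAux_spec _ _).2.1.symm
        | exact (gcolAux_spec _ _).2.2.1.symm
        | exact (gcolAux_spec _ _).2.2.2.1.symm
        | exact (gcolAux_spec _ _).2.2.2.2.1.symm
        | exact (gcolAux_spec _ _).2.2.2.2.2.1.symm
  · exact absurd h not_false
  · obtain ⟨hpq, hkl⟩ := h
    cases hpq
    obtain ⟨s1, s2, s3, s4, s5, s6, s7, s8, s9⟩ := gcolAux_spec (C i₁) (C j₁)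
    rcases hkl with ⟨rfl, rfl⟩ | ⟨rfl, rfl⟩ | ⟨rfl, rfl⟩ <;>
      simp only [gcolG] <;> assumption


theorem stmt1 {n : ℕ} (G : SimpleGraph (Fin n)) :
    G.Colorable 3 ↔
      ∃ A : Matrix (GVert n × Fin 3) (GVert n × Fin 3) ℂ,
        A.PosSemidef ∧ A.rank ≤ 3 ∧ Fits (triDec (gadgetGraph G)) A := by
  constructor
  · -- forward direction
    rintro ⟨C⟩
    let D : GVert n × Fin 3 → Fin 3 := fun p => gcolG C p.1 + p.2
    have hDproper : ∀ p q, (triDec (gadgetGraph G)).Adj p q → D p ≠ D q := by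
      have haux1 : ∀ a b : Fin 3, a ≠ b → a + 0 ≠ b + 0 := by decide
      have haux2 : ∀ a s t : Fin 3, s ≠ t → a + s ≠ a + t := by decide
      have key : ∀ p q : GVert n × Fin 3,
          ((p.2 = 0 ∧ q.2 = 0 ∧ (gadgetGraph G).Adj p.1 q.1) ∨ (p.1 = q.1 ∧ p.2 ≠ q.2)) →
          D p ≠ D q := by
        rintro ⟨x, s⟩ ⟨y, t⟩ (⟨hs, ht, hadj⟩ | ⟨hxy, hst⟩)
        · dsimp only at hs ht
          subst hs; subst ht
          have hg : gcolG C x ≠ gcolG C y := by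
            rw [gadgetGraph, SimpleGraph.fromRel_adj] at hadj
            obtain ⟨_, hrel | hrel⟩ := hadj
            · exact gcolG_proper G C _ _ hrel
            · exact (gcolG_proper G C _ _ hrel).symm
          exact haux1 _ _ hg
        · dsimp only at hxy hst
          subst hxy
          exact haux2 _ _ _ hst
      intro p q hpq
      rw [triDec, SimpleGraph.fromRel_adj] at hpq
      obtain ⟨hne, h | h⟩ := hpq
      · exact key p q h
      · exact (key q p h).symm
    let M : Matrix (Fin 3) (GVert n × Fin 3) ℂ :=
      Matrix.of fun k p => if D p = k then 1 else 0
    have hentry : ∀ p q, (Mᴴ * M) p q = if D p = D q then (1:ℂ) else 0 := by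
      intro p q
      rw [Matrix.mul_apply]
      by_cases h : D p = D q
      · rw [if_pos h, Finset.sum_eq_single (D q)]
        · simp [M, Matrix.conjTranspose_apply, h]
        · intro l _ hl
          simp [M, Matrix.conjTranspose_apply, Ne.symm hl]
        · simp
      · rw [if_neg h]
        apply Finset.sum_eq_zero
        intro k _
        simp only [M, Matrix.conjTranspose_apply, Matrix.of_apply]
        by_cases h1 : D p = k
        · have h2 : D q ≠ k := fun hh => h (h1.trans hh.symm)
          simp [h1, h2]
        · simp [h1]
    refine ⟨Mᴴ * M, Matrix.posSemidef_conjTranspose_mul_self M, ?_, ?_, ?_⟩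
    · rw [Matrix.rank_conjTranspose_mul_self]
      exact M.rank_le_card_height.trans (by simp)
    · intro p
      rw [hentry]
      simp
    · intro p q hadj
      rw [hentry]
      simp [hDproper p q hadj]
  · -- converse direction
    rintro ⟨A, hPSD, hrank, hfit⟩
    obtain ⟨B, rfl⟩ : ∃ B : Matrix (GVert n × Fin 3) (GVert n × Fin 3) ℂ, A = Bᴴ * B := by
      classical
      open scoped MatrixOrder in
      obtain ⟨X, hX, -, rfl⟩ :=
        CFC.exists_sqrt_of_isSelfAdjoint_of_quasispectrumRestricts hPSD.isHermitian
          (QuasispectrumRestricts.nnreal_of_nonneg hPSD.nonneg)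
      exact ⟨X, by rw [show Xᴴ = X from hX.star_eq]⟩
    set col : GVert n × Fin 3 → EuclideanSpace ℂ (GVert n × Fin 3) :=
      fun v => (WithLp.equiv 2 _).symm (Bᵀ v) with hcol
    have hgram : ∀ v w, ⟪col v, col w⟫ = (Bᴴ * B) v w := by
      intro v w
      simp [hcol, PiLp.inner_apply, RCLike.inner_apply, Matrix.mul_apply,
        Matrix.conjTranspose_apply, Matrix.transpose_apply]
      exact Finset.sum_congr rfl fun _ _ => mul_comm _ _
    have hfr : finrank ℂ ↥(Submodule.span ℂ (Set.range col)) ≤ 3 := by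
      set e : EuclideanSpace ℂ (GVert n × Fin 3) ≃ₗ[ℂ] ((GVert n × Fin 3) → ℂ) :=
        WithLp.linearEquiv 2 ℂ ((GVert n × Fin 3) → ℂ) with he
      have hmap : Submodule.map e.toLinearMap (Submodule.span ℂ (Set.range col)) =
          Submodule.span ℂ (Set.range Bᵀ) := by
        rw [Submodule.map_span, ← Set.range_comp]
        rfl
      have h1 : finrank ℂ ↥(Submodule.span ℂ (Set.range col)) =
          finrank ℂ ↥(Submodule.map e.toLinearMap (Submodule.span ℂ (Set.range col))) :=
        (LinearEquiv.finrank_map_eq e _).symm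
      have hBrank : B.rank ≤ 3 := by
        rw [← Matrix.rank_conjTranspose_mul_self]
        exact hrank
      rw [h1, hmap]
      exact (Matrix.rank_eq_finrank_span_cols B).symm.le.trans hBrank
    obtain ⟨u, hu⟩ := exists_euclidean_rep col hfr
    have hdim3 : finrank ℂ (EuclideanSpace ℂ (Fin 3)) ≤ 3 := by simp
    have hinner : ∀ v w, ⟪u v, u w⟫ = (Bᴴ * B) v w := by
      intro v w
      rw [hu, hgram]
    have hunit : ∀ v, ⟪u v, u v⟫ = 1 := fun v => by rw [hinner]; exact hfit.1 v
    have horth : ∀ x y : GVert n, (gadgetGraph G).Adj x y → ⟪u (x,0), u (y,0)⟫ = 0 := by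
      intro x y h
      rw [hinner]
      apply hfit.2
      rw [triDec, SimpleGraph.fromRel_adj]
      exact ⟨fun hh => h.ne (congrArg Prod.fst hh), Or.inl (Or.inl ⟨rfl, rfl, h⟩)⟩
    have hgadget_adj : ∀ x y : GVert n, x ≠ y → gadgetRel G x y → (gadgetGraph G).Adj x y := by
      intro x y hne h
      rw [gadgetGraph, SimpleGraph.fromRel_adj]
      exact ⟨hne, Or.inl h⟩
    have main : ∀ v w : Fin n, v < w →
        ⟪u (Sum.inl v, 0), u (Sum.inl w, 0)⟫ = 0 ∨
          ∃ μ : ℂ, u (Sum.inl w, 0) = μ • u (Sum.inl v, 0) := by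
      intro v w hvw
      have ha := horth _ _ (hgadget_adj (Sum.inl v) (Sum.inr (⟨(v,w),hvw⟩, 0))
        (by simp) (Or.inl ⟨rfl, Or.inl rfl⟩))
      have hb := horth _ _ (hgadget_adj (Sum.inl v) (Sum.inr (⟨(v,w),hvw⟩, 1))
        (by simp) (Or.inl ⟨rfl, Or.inr (Or.inl rfl)⟩))
      have hd := horth _ _ (hgadget_adj (Sum.inl v) (Sum.inr (⟨(v,w),hvw⟩, 3))
        (by simp) (Or.inl ⟨rfl, Or.inr (Or.inr rfl)⟩))
      have hab := horth _ _ (hgadget_adj (Sum.inr (⟨(v,w),hvw⟩, 0)) (Sum.inr (⟨(v,w),hvw⟩, 1))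
        (by simp) ⟨rfl, Or.inl ⟨rfl, rfl⟩⟩)
      have haj := horth _ _ ((hgadget_adj (Sum.inl w) (Sum.inr (⟨(v,w),hvw⟩, 0))
        (by simp) (Or.inr ⟨rfl, Or.inl rfl⟩)).symm)
      have hbc := horth _ _ (hgadget_adj (Sum.inr (⟨(v,w),hvw⟩, 1)) (Sum.inr (⟨(v,w),hvw⟩, 2))
        (by simp) ⟨rfl, Or.inr (Or.inl ⟨rfl, rfl⟩)⟩)
      have hcd := horth _ _ (hgadget_adj (Sum.inr (⟨(v,w),hvw⟩, 2)) (Sum.inr (⟨(v,w),hvw⟩, 3))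
        (by simp) ⟨rfl, Or.inr (Or.inr ⟨rfl, rfl⟩)⟩)
      have hcj := horth _ _ ((hgadget_adj (Sum.inl w) (Sum.inr (⟨(v,w),hvw⟩, 2))
        (by simp) (Or.inr ⟨rfl, Or.inr (Or.inl rfl)⟩)).symm)
      have hdj := horth _ _ ((hgadget_adj (Sum.inl w) (Sum.inr (⟨(v,w),hvw⟩, 3))
        (by simp) (Or.inr ⟨rfl, Or.inr (Or.inr rfl)⟩)).symm)
      exact gadget_lemma hdim3 (u (Sum.inl v, 0)) (u (Sum.inl w, 0))
        (u (Sum.inr (⟨(v,w),hvw⟩, 0), 0)) (u (Sum.inr (⟨(v,w),hvw⟩, 1), 0))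
        (u (Sum.inr (⟨(v,w),hvw⟩, 2), 0)) (u (Sum.inr (⟨(v,w),hvw⟩, 3), 0))
        (hunit _) (hunit _) (hunit _) (hunit _) (hunit _) (hunit _)
        ha hb hd hab haj hbc hcd hcj hdj
    have hdich : ∀ v w : Fin n, v ≠ w →
        ⟪u (Sum.inl v, 0), u (Sum.inl w, 0)⟫ = 0 ∨
          ∃ μ : ℂ, u (Sum.inl w, 0) = μ • u (Sum.inl v, 0) := by
      intro v w hne
      rcases lt_or_gt_of_ne hne with h | h
      · exact main v w h
      · rcases main w v h with h0 | ⟨μ, hμ⟩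
        · left
          rw [← inner_conj_symm, h0, map_zero]
        · right
          have hμ0 : μ ≠ 0 := by
            rintro rfl
            rw [zero_smul] at hμ
            exact unit_ne_zero (hunit (Sum.inl v, 0)) hμ
          exact ⟨μ⁻¹, by rw [hμ, smul_smul, inv_mul_cancel₀ hμ0, one_smul]⟩
    exact coloring_of_vectors G hdim3 (fun v => u (Sum.inl v, 0)) (fun v => hunit _)
      hdich (fun v w hvw => horth _ _ (hgadget_adj (Sum.inl v) (Sum.inl w)
        (fun hh => hvw.ne (Sum.inl.inj hh)) hvw))
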